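/- Let p > 1, γ > 0, and δ_γ = γ^{(p−1)/p}/p^{1/p}. The function g : ℝ → ℝ given by g(z) = δ_γ·z − (z + (1/γ)(1−p)/p)^{1/p} is convex and monotonically nondecreasing on the interval [1/γ, ∞). -/

import Mathlib

/-- `δ_γ = γ^{(p-1)/p} / p^{1/p}`. -/
noncomputable def deltaGamma (p γ : ℝ) : ℝ := γ ^ ((p - 1)/p) / p ^ ((1:ℝ)/p)

theorem stmt_9 (p γ : ℝ) (hp : 1 < p) (hγ : 0 < γ)
    (g : ℝ → ℝ)
    (hg : ∀ z : ℝ, g z = deltaGamma p γ * z - (z + (1/γ) * ((1 - p)/p)) ^ ((1:ℝ)/p)) :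
    ConvexOn ℝ (Set.Ici (1/γ)) g ∧ MonotoneOn g (Set.Ici (1/γ)) := by
  have hp0 : (0:ℝ) < p := by linarith
  set c : ℝ := (1/γ) * ((1 - p)/p) with hc
  set r : ℝ := (1:ℝ)/p with hr
  have hr0 : 0 < r := by positivity
  have hr1 : r ≤ 1 := by rw [hr, div_le_one hp0]; linarith
  -- lower bound for the shifted variable
  have hkey : ∀ z : ℝ, 1/γ ≤ z → 1/(γ*p) ≤ z + c := by
    intro z hz
    have : 1/γ + c = 1/(γ*p) := by rw [hc]; field_simp; ring
    linarith
  have hγp : (0:ℝ) < 1/(γ*p) := by positivity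
  -- δ equals (1/(γp))^(r-1)/p
  have hδ : deltaGamma p γ = (1/(γ*p)) ^ (r - 1) / p := by
    have h1 : (1/(γ*p)) ^ (r - 1) = (γ*p) ^ ((p-1)/p) := by
      rw [one_div, Real.inv_rpow (by positivity), ← Real.rpow_neg (by positivity)]
      congr 1
      rw [hr]; field_simp; ring
    have hsum : p ^ ((p-1)/p) * p ^ ((1:ℝ)/p) = p := by
      rw [← Real.rpow_add hp0]
      have : (p-1)/p + 1/p = 1 := by field_simp; ring
      rw [this, Real.rpow_one]
    rw [h1, Real.mul_rpow hγ.le hp0.le, deltaGamma,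
      div_eq_div_iff (by positivity : (0:ℝ) < p ^ ((1:ℝ)/p)).ne' hp0.ne']
    linear_combination -(γ ^ ((p-1)/p)) * hsum
  have hδ0 : 0 ≤ deltaGamma p γ := by rw [deltaGamma]; positivity
  -- monotonicity
  have hmono : MonotoneOn g (Set.Ici (1/γ)) := by
    intro x hx y hy hxy
    rw [hg, hg]
    set b := x + c with hb
    set a := y + c with ha
    have hbpos : 0 < b := lt_of_lt_of_le hγp (hkey x hx)
    have hba : b ≤ a := by rw [hb, ha]; linarith
    have hs : -1 ≤ a/b - 1 := by
      have : 0 ≤ a/b := div_nonneg (hbpos.trans_le hba).le hbpos.le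
      linarith
    have hbern := rpow_one_add_le_one_add_mul_self hs hr0.le hr1
    have h1 : (1 + (a/b - 1)) = a/b := by ring
    rw [h1, Real.div_rpow (hbpos.trans_le hba).le hbpos.le] at hbern
    have h2 : a ^ r ≤ b ^ r + b ^ (r-1) / p * (a - b) := by
      have hbr : 0 < b ^ r := Real.rpow_pos_of_pos hbpos r
      have hmul := mul_le_mul_of_nonneg_left hbern hbr.le
      have hm2 : b ^ r * (a ^ r / b ^ r) = a ^ r := by field_simp
      rw [hm2] at hmul
      have h3 : b ^ (r - 1) = b ^ r / b := Real.rpow_sub_one hbpos.ne' r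
      rw [h3]
      calc a ^ r ≤ b ^ r * (1 + r * (a/b - 1)) := hmul
        _ = b ^ r + b ^ r / b / p * (a - b) := by
            rw [hr]; field_simp
    have h4 : b ^ (r-1) / p ≤ deltaGamma p γ := by
      rw [hδ]
      exact div_le_div_of_nonneg_right
        (Real.rpow_le_rpow_of_nonpos hγp (hkey x hx) (by linarith)) hp0.le
    have h5 : a ^ r - b ^ r ≤ deltaGamma p γ * (y - x) := by
      have hab : a - b = y - x := by rw [ha, hb]; ring
      have h6 : b ^ (r-1) / p * (a - b) ≤ deltaGamma p γ * (a - b) :=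
        mul_le_mul_of_nonneg_right h4 (by linarith)
      rw [hab] at h6
      rw [hab] at h2
      linarith
    linarith
  -- concavity of the rpow part
  have hconc : ConcaveOn ℝ (Set.Ici (1/γ)) (fun z => (z + c) ^ r) := by
    have h1 := Real.concaveOn_rpow hr0.le hr1
    refine ⟨convex_Ici _, fun x hx y hy a b ha' hb' hab => ?_⟩
    have hx0 : (0:ℝ) ≤ x + c := le_trans hγp.le (hkey x hx)
    have hy0 : (0:ℝ) ≤ y + c := le_trans hγp.le (hkey y hy)
    have h2 := h1.2 (Set.mem_Ici.mpr hx0) (Set.mem_Ici.mpr hy0) ha' hb' hab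
    simp only [smul_eq_mul] at h2 ⊢
    have heq : a * (x + c) + b * (y + c) = a * x + b * y + c := by
      linear_combination c * hab
    rw [heq] at h2
    exact h2
  have hlin : ConvexOn ℝ (Set.Ici (1/γ)) (fun z => deltaGamma p γ * z) :=
    ⟨convex_Ici _, fun x _ y _ a b _ _ _ => by
      simp only [smul_eq_mul]; exact le_of_eq (by ring)⟩
  have hconv := hlin.sub hconc
  have hgeq : g = (fun z => deltaGamma p γ * z) - (fun z => (z + c) ^ r) :=
    funext fun z => by rw [hg z]; rfl
  exact ⟨hgeq ▸ hconv, hmono⟩
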